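/- arXiv:2501.04461 — 3 statements merged into one kernel-verified Lean document; each statement's English description precedes it below -/
import Mathlib

section
/- Let n ≥ 1, let {a_G}_{G ∈ M_n} be complex numbers, and let Q be a monic polynomial in F_q[t]. Then the sum over all Dirichlet characters χ modulo Q of |Σ_{G ∈ M_n} a_G χ(G)|² is at most 2·φ(Q)·(q^{n - deg Q} + 1)·Σ_{G ∈ M_n, gcd(G,Q)=1} |a_G|². -/
open Polynomial Finset Filter
open scoped Classical

/-- The set of monic polynomials of degree `n` over `Fq`. -/
noncomputable def Mn (Fq : Type) [Field Fq] [Fintype Fq] (n : ℕ) : Finset (Polynomial Fq) :=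
  (Finset.univ : Finset (Fin n → Fq)).image
    (fun c => Polynomial.X ^ n + ∑ i : Fin n, Polynomial.C (c i) * Polynomial.X ^ (i : ℕ))

/-- The set of monic irreducible polynomials of degree `x` over `Fq`. -/
noncomputable def Px (Fq : Type) [Field Fq] [Fintype Fq] (x : ℕ) : Finset (Polynomial Fq) :=
  (Mn Fq x).filter Irreducible

/-- `Mn` extended to integer degrees: empty for negative degree. -/
noncomputable def MnInt (Fq : Type) [Field Fq] [Fintype Fq] (m : ℤ) : Finset (Polynomial Fq) :=
  if 0 ≤ m then Mn Fq m.toNat else ∅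

/-- The Liouville function on `Fq[t]`: `(-1)` to the number of irreducible
factors counted with multiplicity. -/
noncomputable def liouville {Fq : Type} [Field Fq] [Fintype Fq] (G : Polynomial Fq) : ℤ :=
  (-1) ^ Multiset.card (UniqueFactorizationMonoid.factors G)

/-- The residue ring `Fq[t]/(Q)`. -/
abbrev RQ (Fq : Type) [Field Fq] [Fintype Fq] (Q : Polynomial Fq) :=
  Polynomial Fq ⧸ Ideal.span {Q}

/-- Value of a Dirichlet character mod `Q` at a polynomial. -/
noncomputable def chpoly {Fq : Type} [Field Fq] [Fintype Fq] {Q : Polynomial Fq}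
    (χ : MulChar (RQ Fq Q) ℂ) (G : Polynomial Fq) : ℂ :=
  χ (Ideal.Quotient.mk (Ideal.span {Q}) G)

/-- A Dirichlet character is even if it is invariant under multiplication by
nonzero constants. -/
noncomputable def IsEvenChar {Fq : Type} [Field Fq] [Fintype Fq] {Q : Polynomial Fq}
    (χ : MulChar (RQ Fq Q) ℂ) : Prop :=
  ∀ (c : Fqˣ) (G : Polynomial Fq), chpoly χ (Polynomial.C (c : Fq) * G) = chpoly χ G

/-- Euler's function for polynomial moduli: `φ(Q) = |(Fq[t]/Q)ˣ|`. -/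
noncomputable def phi (Fq : Type) [Field Fq] [Fintype Fq] (Q : Polynomial Fq) : ℕ :=
  Nat.card (Polynomial Fq ⧸ Ideal.span {Q})ˣ

/-- A polynomial is `h`-smooth if all of its irreducible factors have degree at most `h`. -/
def IsSmooth {Fq : Type} [Field Fq] [Fintype Fq] (h : ℕ) (G : Polynomial Fq) : Prop :=
  ∀ P : Polynomial Fq, Irreducible P → P ∣ G → P.natDegree ≤ h

/-- The von Mangoldt function on `Fq[t]`: `Λ(P^k) = deg P` for `P` monic
irreducible and `k ≥ 1`, and `Λ = 0` otherwise. -/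
noncomputable def Lam {Fq : Type} [Field Fq] [Fintype Fq] (G : Polynomial Fq) : ℕ :=
  if hG : ∃ P : Polynomial Fq, P.Monic ∧ Irreducible P ∧ ∃ k, 1 ≤ k ∧ G = P ^ k
  then hG.choose.natDegree else 0

/-- `ω_{[h,n]}(M)`: number of distinct monic irreducible divisors of `M` of degree in `[h,n]`. -/
noncomputable def omegaIcc {Fq : Type} [Field Fq] [Fintype Fq] (h n : ℕ) (M : Polynomial Fq) : ℕ :=
  (((Finset.Icc h n).biUnion (Px Fq)).filter (· ∣ M)).card

/-- `ω_{(h,n]}(M)`: number of distinct monic irreducible divisors of `M` of degree in `(h,n]`. -/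
noncomputable def omegaIoc {Fq : Type} [Field Fq] [Fintype Fq] (h n : ℕ) (M : Polynomial Fq) : ℕ :=
  (((Finset.Ioc h n).biUnion (Px Fq)).filter (· ∣ M)).card

/-- The polynomials of degree at most `h`. -/
noncomputable def Dle (Fq : Type) [Field Fq] [Fintype Fq] (h : ℕ) : Finset (Polynomial Fq) :=
  (Finset.univ : Finset (Fin (h + 1) → Fq)).image
    (fun c => ∑ i : Fin (h + 1), Polynomial.C (c i) * Polynomial.X ^ (i : ℕ))

/-- The short interval of length `h` about `G₀`: all `G` with `deg (G - G₀) ≤ h`. -/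
noncomputable def Ih {Fq : Type} [Field Fq] [Fintype Fq] (h : ℕ) (G₀ : Polynomial Fq) :
    Finset (Polynomial Fq) :=
  (Dle Fq h).image (fun E => G₀ + E)

section Aux

variable {Fq : Type} [Field Fq] [Fintype Fq]

lemma aux_mem_Mn {n : ℕ} {G : Polynomial Fq} (hG : G ∈ Mn Fq n) :
    G.Monic ∧ G.natDegree = n := by
  simp only [Mn, Finset.mem_image] at hG
  obtain ⟨c, -, rfl⟩ := hG
  have hd : (∑ i : Fin n, Polynomial.C (c i) * Polynomial.X ^ (i : ℕ)).degree
      < (Polynomial.X ^ n : Polynomial Fq).degree := by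
    rw [Polynomial.degree_X_pow]
    refine lt_of_le_of_lt (Polynomial.degree_sum_le _ _) ?_
    rw [Finset.sup_lt_iff (by exact_mod_cast WithBot.bot_lt_coe n)]
    intro i _
    refine lt_of_le_of_lt (Polynomial.degree_C_mul_X_pow_le _ _) ?_
    exact_mod_cast i.2
  refine ⟨(Polynomial.monic_X_pow n).add_of_left hd, ?_⟩
  apply Polynomial.natDegree_eq_of_degree_eq_some
  rw [Polynomial.degree_add_eq_left_of_degree_lt hd, Polynomial.degree_X_pow]

omit [Fintype Fq] in
lemma aux_isUnit_mk_iff (Q G : Polynomial Fq) :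
    IsUnit (Ideal.Quotient.mk (Ideal.span {Q}) G) ↔ IsCoprime G Q := by
  constructor
  · rintro ⟨u, hu⟩
    obtain ⟨v, hv⟩ := Ideal.Quotient.mk_surjective (I := Ideal.span {Q})
      (↑u⁻¹ : Polynomial Fq ⧸ Ideal.span {Q})
    have hmul : Ideal.Quotient.mk (Ideal.span {Q}) (v * G) = 1 := by
      rw [map_mul, hv, ← hu]; exact u.inv_mul
    have hdvd : Q ∣ (v * G - 1) := by
      rw [← Ideal.Quotient.eq_zero_iff_dvd, map_sub, hmul, map_one, sub_self]
    obtain ⟨w, hw⟩ := hdvd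
    exact ⟨v, -w, by linear_combination hw⟩
  · rintro ⟨v, w, h⟩
    apply IsUnit.of_mul_eq_one (Ideal.Quotient.mk (Ideal.span {Q}) v)
    have h0 : Ideal.Quotient.mk (Ideal.span {Q}) (w * Q) = 0 := by
      rw [Ideal.Quotient.eq_zero_iff_dvd]; exact dvd_mul_left Q w
    rw [← map_mul]
    have hGv : G * v = (v * G + w * Q) - w * Q := by ring
    rw [hGv, map_sub, h, map_one, h0, sub_zero]

lemma aux_fiber_card_le {Q : Polynomial Fq} (hQ : Q.Monic) (n : ℕ) (r : RQ Fq Q) :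
    (((Mn Fq n).filter (fun G => Ideal.Quotient.mk (Ideal.span {Q}) G = r)).card : ℝ)
      ≤ (Fintype.card Fq : ℝ) ^ ((n : ℤ) - (Q.natDegree : ℤ)) + 1 := by
  have hq1 : (1 : ℝ) < (Fintype.card Fq : ℝ) := by exact_mod_cast Fintype.one_lt_card
  have hqpos : (0 : ℝ) < (Fintype.card Fq : ℝ) ^ ((n : ℤ) - (Q.natDegree : ℤ)) :=
    zpow_pos (by linarith) _
  set m := n - Q.natDegree with hm
  set s := (Mn Fq n).filter (fun G => Ideal.Quotient.mk (Ideal.span {Q}) G = r) with hs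
  rcases Finset.eq_empty_or_nonempty s with h | ⟨G₀, hG₀⟩
  · rw [h]; simp; positivity
  have hQ0 : Q ≠ 0 := hQ.ne_zero
  have hrec : ∀ G ∈ s, G = G₀ + Q * ((G - G₀) /ₘ Q) := by
    intro G hG
    have hGm := (Finset.mem_filter.1 hG).2
    have hG₀m := (Finset.mem_filter.1 hG₀).2
    have hdvd : Q ∣ G - G₀ := by
      rw [← Ideal.Quotient.eq_zero_iff_dvd, map_sub, hGm, hG₀m, sub_self]
    have h2 := Polynomial.modByMonic_add_div (G - G₀) Q
    rw [(Polynomial.modByMonic_eq_zero_iff_dvd hQ).2 hdvd, zero_add] at h2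
    rw [h2]; ring
  have hsmall : ∀ G ∈ s, (G - G₀) /ₘ Q = 0 ∨ ((G - G₀) /ₘ Q).natDegree < m := by
    intro G hG
    by_cases hGG : G = G₀
    · left; rw [hGG, sub_self, Polynomial.zero_divByMonic]
    · right
      have hmonG := aux_mem_Mn (Finset.mem_filter.1 hG).1
      have hmonG₀ := aux_mem_Mn (Finset.mem_filter.1 hG₀).1
      have hsub0 : G - G₀ ≠ 0 := sub_ne_zero.2 hGG
      have hdeg_eq : G.degree = G₀.degree := by
        rw [Polynomial.degree_eq_natDegree hmonG.1.ne_zero,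
          Polynomial.degree_eq_natDegree hmonG₀.1.ne_zero, hmonG.2, hmonG₀.2]
      have hdegsub : (G - G₀).natDegree < n := by
        rw [Polynomial.natDegree_lt_iff_degree_lt hsub0]
        have h3 := Polynomial.degree_sub_lt hdeg_eq hmonG.1.ne_zero
          (hmonG.1.leadingCoeff.trans hmonG₀.1.leadingCoeff.symm)
        rw [Polynomial.degree_eq_natDegree hmonG.1.ne_zero, hmonG.2] at h3
        exact h3
      have hKne : (G - G₀) /ₘ Q ≠ 0 := by
        intro h0
        have := hrec G hG
        rw [h0, mul_zero, add_zero] at this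
        exact hGG this
      have hmul : (G - G₀).natDegree = Q.natDegree + ((G - G₀) /ₘ Q).natDegree := by
        have h2 := Polynomial.modByMonic_add_div (G - G₀) Q
        have hdvd : Q ∣ G - G₀ := by
          have hGm := (Finset.mem_filter.1 hG).2
          have hG₀m := (Finset.mem_filter.1 hG₀).2
          rw [← Ideal.Quotient.eq_zero_iff_dvd, map_sub, hGm, hG₀m, sub_self]
        rw [(Polynomial.modByMonic_eq_zero_iff_dvd hQ).2 hdvd, zero_add] at h2
        have h4 := Polynomial.natDegree_mul hQ0 hKne
        rw [h2] at h4
        exact h4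
      omega
  have hcard : s.card ≤ Fintype.card Fq ^ m := by
    have hinj : Set.InjOn (fun G => (fun i : Fin m => ((G - G₀) /ₘ Q).coeff (i : ℕ))) ↑s := by
      intro G hG H hH hFG
      have hKeq : (G - G₀) /ₘ Q = (H - G₀) /ₘ Q := by
        ext i
        by_cases hi : i < m
        · exact congrFun hFG ⟨i, hi⟩
        · push_neg at hi
          have z1 : ((G - G₀) /ₘ Q).coeff i = 0 := by
            rcases hsmall G hG with h0 | hlt
            · rw [h0, Polynomial.coeff_zero]
            · exact Polynomial.coeff_eq_zero_of_natDegree_lt (lt_of_lt_of_le hlt hi)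
          have z2 : ((H - G₀) /ₘ Q).coeff i = 0 := by
            rcases hsmall H hH with h0 | hlt
            · rw [h0, Polynomial.coeff_zero]
            · exact Polynomial.coeff_eq_zero_of_natDegree_lt (lt_of_lt_of_le hlt hi)
          rw [z1, z2]
      calc G = G₀ + Q * ((G - G₀) /ₘ Q) := hrec G hG
        _ = G₀ + Q * ((H - G₀) /ₘ Q) := by rw [hKeq]
        _ = H := (hrec H hH).symm
    have := Finset.card_le_card_of_injOn _ (fun G _ => Finset.mem_univ
      ((fun i : Fin m => ((G - G₀) /ₘ Q).coeff (i : ℕ)))) hinj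
    simpa [Fintype.card_fun] using this
  by_cases hle : Q.natDegree ≤ n
  · have hcast : ((Fintype.card Fq ^ m : ℕ) : ℝ)
        = (Fintype.card Fq : ℝ) ^ ((n : ℤ) - (Q.natDegree : ℤ)) := by
      push_cast
      rw [← zpow_natCast]
      congr 1
      omega
    calc (s.card : ℝ) ≤ ((Fintype.card Fq ^ m : ℕ) : ℝ) := by exact_mod_cast hcard
      _ = (Fintype.card Fq : ℝ) ^ ((n : ℤ) - (Q.natDegree : ℤ)) := hcast
      _ ≤ _ := by linarith
  · have hm0 : m = 0 := by omega
    have : (s.card : ℝ) ≤ 1 := by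
      rw [hm0] at hcard; simpa using (Nat.cast_le (α := ℝ)).2 hcard
    linarith

lemma aux_finite_RQ {Q : Polynomial Fq} (hQ : Q.Monic) : Finite (RQ Fq Q) := by
  have : Finite (AdjoinRoot Q) :=
    Finite.of_equiv _ ((AdjoinRoot.powerBasis' hQ).basis.equivFun.toEquiv).symm
  exact this

lemma aux_sum_fiber {Q : Polynomial Fq} [Fintype (RQ Fq Q)ˣ] {M : Type} [AddCommMonoid M]
    (s : Finset (Polynomial Fq)) (f : Polynomial Fq → M) :
    ∑ u : (RQ Fq Q)ˣ, ∑ G ∈ s.filter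
        (fun G => Ideal.Quotient.mk (Ideal.span {Q}) G = (u : RQ Fq Q)), f G
      = ∑ G ∈ s.filter (fun G => IsUnit (Ideal.Quotient.mk (Ideal.span {Q}) G)), f G := by
  classical
  set g : Polynomial Fq → (RQ Fq Q)ˣ := fun G =>
    if h : IsUnit (Ideal.Quotient.mk (Ideal.span {Q}) G) then h.unit else 1 with hg
  rw [← Finset.sum_fiberwise
    (s.filter (fun G => IsUnit (Ideal.Quotient.mk (Ideal.span {Q}) G))) g f]
  refine Finset.sum_congr rfl fun u _ => ?_
  congr 1
  rw [Finset.filter_filter]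
  apply Finset.filter_congr
  intro G hGs
  constructor
  · intro h
    have hu : IsUnit (Ideal.Quotient.mk (Ideal.span {Q}) G) := by rw [h]; exact u.isUnit
    refine ⟨hu, ?_⟩
    simp only [hg, dif_pos hu]
    exact Units.ext (by rw [IsUnit.unit_spec, h])
  · rintro ⟨hu, hgu⟩
    rw [← hgu]
    simp only [hg, dif_pos hu]
    rw [IsUnit.unit_spec]

lemma aux_sum_chars {Q : Polynomial Fq} [Fintype (RQ Fq Q)] [Fintype (RQ Fq Q)ˣ]
    [Fintype (MulChar (RQ Fq Q) ℂ)] (x : RQ Fq Q) :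
    ∑ χ : MulChar (RQ Fq Q) ℂ, χ x
      = if x = 1 then (Fintype.card (RQ Fq Q)ˣ : ℂ) else 0 := by
  haveI : NeZero (Monoid.exponent (RQ Fq Q)ˣ) := ⟨Monoid.exponent_ne_zero_of_finite⟩
  split_ifs with h
  · subst h
    simp only [MulChar.map_one]
    rw [Finset.sum_const, Finset.card_univ, nsmul_eq_mul, mul_one]
    have hc := MulChar.card_eq_card_units_of_hasEnoughRootsOfUnity (RQ Fq Q) ℂ
    rw [Nat.card_eq_fintype_card, Nat.card_eq_fintype_card] at hc
    exact_mod_cast congrArg (Nat.cast : ℕ → ℂ) hc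
  · obtain ⟨χ, hχ⟩ := MulChar.exists_apply_ne_one_of_hasEnoughRootsOfUnity (RQ Fq Q) ℂ h
    refine eq_zero_of_mul_eq_self_left hχ ?_
    simp only [Finset.mul_sum, ← MulChar.mul_apply]
    exact Fintype.sum_bijective _ (Group.mulLeft_bijective χ) _ _ fun χ' ↦ rfl

lemma aux_ofReal_norm_sq (z : ℂ) : ((‖z‖ ^ 2 : ℝ) : ℂ) = z * (starRingEnd ℂ) z := by
  rw [Complex.mul_conj]
  norm_cast
  rw [Complex.sq_norm]

end Aux

theorem l2_mean_value_theorem (Fq : Type) [Field Fq] [Fintype Fq]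
    (n : ℕ) (hn : 1 ≤ n) (Q : Polynomial Fq) (hQ : Q.Monic)
    (a : Polynomial Fq → ℂ) :
    ∑ᶠ χ : MulChar (RQ Fq Q) ℂ, ‖∑ G ∈ Mn Fq n, a G * chpoly χ G‖ ^ 2 ≤
      2 * (phi Fq Q : ℝ) * ((Fintype.card Fq : ℝ) ^ ((n : ℤ) - (Q.natDegree : ℤ)) + 1) *
        ∑ G ∈ (Mn Fq n).filter (fun G => IsCoprime G Q), ‖a G‖ ^ 2 := by
  classical
  haveI hfin : Finite (RQ Fq Q) := aux_finite_RQ hQ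
  haveI : Fintype (RQ Fq Q) := Fintype.ofFinite _
  haveI : Fintype (RQ Fq Q)ˣ := Fintype.ofFinite _
  haveI : Fintype (MulChar (RQ Fq Q) ℂ) := Fintype.ofFinite _
  rw [finsum_eq_sum_of_fintype]
  set N : ℕ := Fintype.card (RQ Fq Q)ˣ with hN
  set B : ℝ := (Fintype.card Fq : ℝ) ^ ((n : ℤ) - (Q.natDegree : ℤ)) + 1 with hB
  set S : MulChar (RQ Fq Q) ℂ → ℂ := fun χ => ∑ G ∈ Mn Fq n, a G * chpoly χ G with hS
  set b : (RQ Fq Q)ˣ → ℂ := fun u =>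
    ∑ G ∈ (Mn Fq n).filter (fun G => Ideal.Quotient.mk (Ideal.span {Q}) G = (u : RQ Fq Q)),
      a G with hb
  -- decomposition of S χ over unit residues
  have hsplit : ∀ χ : MulChar (RQ Fq Q) ℂ, S χ = ∑ u : (RQ Fq Q)ˣ, b u * χ ↑u := by
    intro χ
    have h1 : (∑ G ∈ Mn Fq n, a G * chpoly χ G) = ∑ G ∈ (Mn Fq n).filter
        (fun G => IsUnit (Ideal.Quotient.mk (Ideal.span {Q}) G)), a G * chpoly χ G := by
      rw [← Finset.sum_filter_add_sum_filter_not (Mn Fq n)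
        (fun G => IsUnit (Ideal.Quotient.mk (Ideal.span {Q}) G)) (fun G => a G * chpoly χ G)]
      have h0 : ∑ G ∈ (Mn Fq n).filter
          (fun G => ¬ IsUnit (Ideal.Quotient.mk (Ideal.span {Q}) G)), a G * chpoly χ G = 0 := by
        refine Finset.sum_eq_zero fun G hG => ?_
        rw [chpoly, MulChar.map_nonunit χ (Finset.mem_filter.1 hG).2, mul_zero]
      rw [h0, add_zero]
    calc S χ = ∑ G ∈ Mn Fq n, a G * chpoly χ G := rfl
      _ = _ := ?_
    rw [h1, ← aux_sum_fiber (Mn Fq n) (fun G => a G * chpoly χ G)]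
    refine Finset.sum_congr rfl fun u _ => ?_
    rw [hb]
    rw [Finset.sum_mul]
    refine Finset.sum_congr rfl fun G hG => ?_
    rw [chpoly, (Finset.mem_filter.1 hG).2]
  have hconj : ∀ χ : MulChar (RQ Fq Q) ℂ,
      (starRingEnd ℂ) (S χ) = ∑ u : (RQ Fq Q)ˣ, (starRingEnd ℂ) (b u) * χ⁻¹ ↑u := by
    intro χ
    rw [hsplit χ, map_sum]
    refine Finset.sum_congr rfl fun u _ => ?_
    rw [map_mul]
    congr 1
    rw [← RCLike.star_def]
    exact MulChar.star_apply' χ _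
  -- orthogonality computation
  have hT : ∑ χ : MulChar (RQ Fq Q) ℂ, S χ * (starRingEnd ℂ) (S χ)
      = (N : ℂ) * ∑ u : (RQ Fq Q)ˣ, b u * (starRingEnd ℂ) (b u) := by
    calc ∑ χ : MulChar (RQ Fq Q) ℂ, S χ * (starRingEnd ℂ) (S χ)
        = ∑ χ : MulChar (RQ Fq Q) ℂ, ∑ u : (RQ Fq Q)ˣ, ∑ v : (RQ Fq Q)ˣ,
            (b u * (starRingEnd ℂ) (b v)) * χ ↑(u * v⁻¹) := by
          refine Finset.sum_congr rfl fun χ _ => ?_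
          rw [hconj χ, hsplit χ, Finset.sum_mul_sum]
          refine Finset.sum_congr rfl fun u _ => Finset.sum_congr rfl fun v _ => ?_
          have hv : χ⁻¹ ↑v = χ ↑(v⁻¹) := by
            rw [MulChar.inv_apply, Ring.inverse_unit]
          rw [hv, Units.val_mul, map_mul]
          ring
      _ = ∑ u : (RQ Fq Q)ˣ, ∑ v : (RQ Fq Q)ˣ,
            (b u * (starRingEnd ℂ) (b v)) * ∑ χ : MulChar (RQ Fq Q) ℂ, χ ↑(u * v⁻¹) := by
          rw [Finset.sum_comm]
          refine Finset.sum_congr rfl fun u _ => ?_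
          rw [Finset.sum_comm]
          exact Finset.sum_congr rfl fun v _ => (Finset.mul_sum _ _ _).symm
      _ = ∑ u : (RQ Fq Q)ˣ, b u * (starRingEnd ℂ) (b u) * (N : ℂ) := by
          refine Finset.sum_congr rfl fun u _ => ?_
          have hstep : ∀ v : (RQ Fq Q)ˣ,
              (b u * (starRingEnd ℂ) (b v)) * ∑ χ : MulChar (RQ Fq Q) ℂ, χ ↑(u * v⁻¹)
                = if v = u then b u * (starRingEnd ℂ) (b v) * (N : ℂ) else 0 := by
            intro v
            rw [aux_sum_chars]
            by_cases h : v = u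
            · subst h
              have h2 : ((v * v⁻¹ : (RQ Fq Q)ˣ) : RQ Fq Q) = 1 := by simp
              rw [if_pos h2, if_pos rfl]
            · rw [if_neg, mul_zero, if_neg h]
              intro hcon
              rw [Units.val_eq_one, mul_inv_eq_one] at hcon
              exact h hcon.symm
          rw [Finset.sum_congr rfl fun v _ => hstep v]
          rw [Fintype.sum_ite_eq' u (fun v => b u * (starRingEnd ℂ) (b v) * (N : ℂ))]
      _ = (N : ℂ) * ∑ u : (RQ Fq Q)ˣ, b u * (starRingEnd ℂ) (b u) := by
          rw [Finset.mul_sum]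
          exact Finset.sum_congr rfl fun u _ => by ring
  -- pass to real numbers
  have hreal : ∑ χ : MulChar (RQ Fq Q) ℂ, ‖S χ‖ ^ 2
      = (N : ℝ) * ∑ u : (RQ Fq Q)ˣ, ‖b u‖ ^ 2 := by
    have h2 : (((∑ χ : MulChar (RQ Fq Q) ℂ, ‖S χ‖ ^ 2 : ℝ)) : ℂ)
        = (((N : ℝ) * ∑ u : (RQ Fq Q)ˣ, ‖b u‖ ^ 2 : ℝ) : ℂ) := by
      rw [Complex.ofReal_sum, Complex.ofReal_mul, Complex.ofReal_sum]
      simp_rw [aux_ofReal_norm_sq]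
      rw [hT, Complex.ofReal_natCast]
    exact_mod_cast h2
  rw [hreal]
  -- Cauchy–Schwarz on each fiber
  have hbound : ∀ u : (RQ Fq Q)ˣ, ‖b u‖ ^ 2 ≤ B *
      ∑ G ∈ (Mn Fq n).filter
        (fun G => Ideal.Quotient.mk (Ideal.span {Q}) G = (u : RQ Fq Q)), ‖a G‖ ^ 2 := by
    intro u
    set t := (Mn Fq n).filter
      (fun G => Ideal.Quotient.mk (Ideal.span {Q}) G = (u : RQ Fq Q)) with ht
    have h1 : ‖b u‖ ≤ ∑ G ∈ t, ‖a G‖ := norm_sum_le _ _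
    have h2 : (∑ G ∈ t, ‖a G‖) ^ 2 ≤ (t.card : ℝ) * ∑ G ∈ t, ‖a G‖ ^ 2 :=
      sq_sum_le_card_mul_sum_sq
    have h3 : (t.card : ℝ) ≤ B := by
      rw [hB]; exact aux_fiber_card_le hQ n _
    have h4 : (0 : ℝ) ≤ ∑ G ∈ t, ‖a G‖ ^ 2 :=
      Finset.sum_nonneg fun G _ => sq_nonneg _
    calc ‖b u‖ ^ 2 ≤ (∑ G ∈ t, ‖a G‖) ^ 2 := by
          exact pow_le_pow_left₀ (norm_nonneg _) h1 2
      _ ≤ (t.card : ℝ) * ∑ G ∈ t, ‖a G‖ ^ 2 := h2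
      _ ≤ B * ∑ G ∈ t, ‖a G‖ ^ 2 := mul_le_mul_of_nonneg_right h3 h4
  have hsum_b : ∑ u : (RQ Fq Q)ˣ, ‖b u‖ ^ 2
      ≤ B * ∑ G ∈ (Mn Fq n).filter (fun G => IsCoprime G Q), ‖a G‖ ^ 2 := by
    have hfilter_eq : (Mn Fq n).filter
        (fun G => IsUnit (Ideal.Quotient.mk (Ideal.span {Q}) G))
        = (Mn Fq n).filter (fun G => IsCoprime G Q) := by
      apply Finset.filter_congr
      intro G _
      simpa using aux_isUnit_mk_iff Q G
    calc ∑ u : (RQ Fq Q)ˣ, ‖b u‖ ^ 2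
        ≤ ∑ u : (RQ Fq Q)ˣ, B * ∑ G ∈ (Mn Fq n).filter
            (fun G => Ideal.Quotient.mk (Ideal.span {Q}) G = (u : RQ Fq Q)), ‖a G‖ ^ 2 :=
          Finset.sum_le_sum fun u _ => hbound u
      _ = B * ∑ u : (RQ Fq Q)ˣ, ∑ G ∈ (Mn Fq n).filter
            (fun G => Ideal.Quotient.mk (Ideal.span {Q}) G = (u : RQ Fq Q)), ‖a G‖ ^ 2 := by
          rw [Finset.mul_sum]
      _ = B * ∑ G ∈ (Mn Fq n).filter
            (fun G => IsUnit (Ideal.Quotient.mk (Ideal.span {Q}) G)), ‖a G‖ ^ 2 := by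
          rw [aux_sum_fiber (Mn Fq n) (fun G => ‖a G‖ ^ 2)]
      _ = B * ∑ G ∈ (Mn Fq n).filter (fun G => IsCoprime G Q), ‖a G‖ ^ 2 := by
          rw [hfilter_eq]
  have hphi : (phi Fq Q : ℝ) = (N : ℝ) := by
    rw [phi, hN, Nat.card_eq_fintype_card]
  rw [hphi]
  have hBpos : (0 : ℝ) < B := by
    rw [hB]
    have hq1 : (1 : ℝ) < (Fintype.card Fq : ℝ) := by exact_mod_cast Fintype.one_lt_card
    have := zpow_pos (by linarith : (0:ℝ) < (Fintype.card Fq : ℝ)) ((n : ℤ) - (Q.natDegree : ℤ))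
    linarith
  have hSig : (0 : ℝ) ≤ ∑ G ∈ (Mn Fq n).filter (fun G => IsCoprime G Q), ‖a G‖ ^ 2 :=
    Finset.sum_nonneg fun G _ => sq_nonneg _
  have hNn : (0 : ℝ) ≤ (N : ℝ) := Nat.cast_nonneg _
  have hstep1 : (N : ℝ) * ∑ u : (RQ Fq Q)ˣ, ‖b u‖ ^ 2
      ≤ (N : ℝ) * (B * ∑ G ∈ (Mn Fq n).filter (fun G => IsCoprime G Q), ‖a G‖ ^ 2) :=
    mul_le_mul_of_nonneg_left hsum_b hNn
  have hprod : (0 : ℝ) ≤ (N : ℝ) * (B * ∑ G ∈ (Mn Fq n).filter (fun G => IsCoprime G Q),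
      ‖a G‖ ^ 2) := by positivity
  have heq : 2 * (N : ℝ) * B * ∑ G ∈ (Mn Fq n).filter (fun G => IsCoprime G Q), ‖a G‖ ^ 2
      = 2 * ((N : ℝ) * (B * ∑ G ∈ (Mn Fq n).filter (fun G => IsCoprime G Q), ‖a G‖ ^ 2)) := by
    ring
  rw [heq]
  linarith
end

section
/- Ramaré's identity for function fields: let 1 ≤ h < n, let f : M → U be a multiplicative function into the unit disc, and let G be a monic polynomial having at least one irreducible factor R with deg R ∈ [h, n]. Then f(G) = Σ f(R·M) / (1_{gcd(R,M)=1} + ω_{[h,n]}(M)), where the sum is over factorizations G = R·M with R monic irreducible of degree in [h,n], and ω_{[h,n]}(M) denotes the number of distinct monic irreducible divisors of M whose degree lies in [h,n]. -/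
open Polynomial Finset Filter
open scoped Classical

lemma mem_Mn {Fq : Type} [Field Fq] [Fintype Fq] {n : ℕ} {P : Polynomial Fq} :
    P ∈ Mn Fq n ↔ P.Monic ∧ P.natDegree = n := by
  constructor
  · rintro hP
    simp only [Mn, Finset.mem_image, Finset.mem_univ, true_and] at hP
    obtain ⟨c, rfl⟩ := hP
    have hdeg : (∑ i : Fin n, Polynomial.C (c i) * Polynomial.X ^ (i : ℕ)).degree
        < ((n : ℕ) : WithBot ℕ) := Polynomial.degree_sum_fin_lt c
    have hmon : (Polynomial.X ^ n + ∑ i : Fin n, Polynomial.C (c i) * Polynomial.X ^ (i : ℕ)).Monic := by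
      apply (Polynomial.monic_X_pow n).add_of_left
      simpa using hdeg
    refine ⟨hmon, ?_⟩
    have : (Polynomial.X ^ n + ∑ i : Fin n, Polynomial.C (c i) * Polynomial.X ^ (i : ℕ)).degree
        = ((n : ℕ) : WithBot ℕ) := by
      rw [Polynomial.degree_add_eq_left_of_degree_lt (by simpa using hdeg)]
      simp
    exact Polynomial.natDegree_eq_of_degree_eq_some this
  · rintro ⟨hmon, rfl⟩
    simp only [Mn, Finset.mem_image, Finset.mem_univ, true_and]
    refine ⟨fun i => P.coeff i, ?_⟩
    have hPX : (P - Polynomial.X ^ P.natDegree).degree < ((P.natDegree : ℕ) : WithBot ℕ) := by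
      have := Polynomial.degree_sub_lt (p := P) (q := Polynomial.X ^ P.natDegree)
        (by rw [Polynomial.degree_eq_natDegree hmon.ne_zero, Polynomial.degree_X_pow]) hmon.ne_zero
        (by simp [hmon.leadingCoeff])
      calc (P - Polynomial.X ^ P.natDegree).degree < P.degree := this
        _ ≤ _ := Polynomial.degree_le_natDegree
    have hco : ∀ i : Fin P.natDegree, (P - Polynomial.X ^ P.natDegree).coeff i = P.coeff i := by
      intro i
      simp [Polynomial.coeff_X_pow, (Fin.is_lt i).ne]
    have key : ∑ i : Fin P.natDegree, Polynomial.C (P.coeff i)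
        * Polynomial.X ^ (i : ℕ) = P - Polynomial.X ^ P.natDegree := by
      have := Polynomial.sum_fin (R := Fq) (fun i a => Polynomial.C a * Polynomial.X ^ i)
        (by simp) hPX
      rw [Polynomial.sum_C_mul_X_pow_eq] at this
      rw [← this]
      exact Finset.sum_congr rfl (fun i _ => by rw [hco i])
    rw [key]; ring

lemma mem_Px {Fq : Type} [Field Fq] [Fintype Fq] {x : ℕ} {P : Polynomial Fq} :
    P ∈ Px Fq x ↔ P.Monic ∧ P.natDegree = x ∧ Irreducible P := by
  simp [Px, mem_Mn, and_assoc, and_comm, and_left_comm]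

lemma mem_bPx {Fq : Type} [Field Fq] [Fintype Fq] {h n : ℕ} {R : Polynomial Fq} :
    R ∈ (Finset.Icc h n).biUnion (Px Fq) ↔
      R.Monic ∧ Irreducible R ∧ R.natDegree ∈ Finset.Icc h n := by
  simp only [Finset.mem_biUnion, mem_Px]
  constructor
  · rintro ⟨x, hx, hm, rfl, hirr⟩; exact ⟨hm, hirr, hx⟩
  · rintro ⟨hm, hirr, hx⟩; exact ⟨R.natDegree, hx, hm, rfl, hirr⟩

theorem ramare_identity (Fq : Type) [Field Fq] [Fintype Fq]
    (h n : ℕ) (hh : 1 ≤ h) (hn : h < n)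
    (f : Polynomial Fq → ℂ) (hf1 : f 1 = 1)
    (hfU : ∀ G, ‖f G‖ ≤ 1)
    (hfmul : ∀ A B : Polynomial Fq, IsCoprime A B → f (A * B) = f A * f B)
    (G : Polynomial Fq) (hG : G.Monic)
    (hfac : ∃ R ∈ (Finset.Icc h n).biUnion (Px Fq), R ∣ G) :
    f G = ∑ R ∈ ((Finset.Icc h n).biUnion (Px Fq)).filter (· ∣ G),
      f (R * (G / R)) /
        ((if IsCoprime R (G / R) then (1 : ℂ) else 0) + (omegaIcc h n (G / R) : ℂ)) := by
  set S := ((Finset.Icc h n).biUnion (Px Fq)).filter (· ∣ G) with hSdef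
  obtain ⟨R0, hR0b, hR0d⟩ := hfac
  have hSne : S.Nonempty := ⟨R0, Finset.mem_filter.2 ⟨hR0b, hR0d⟩⟩
  have hk : 0 < S.card := Finset.card_pos.2 hSne
  have key : ∀ R ∈ S, f (R * (G / R)) /
      ((if IsCoprime R (G / R) then (1:ℂ) else 0) + (omegaIcc h n (G / R) : ℂ))
      = f G / S.card := by
    intro R hR
    obtain ⟨hRb, hRd⟩ := Finset.mem_filter.1 hR
    obtain ⟨hRm, hRirr, hRdeg⟩ := mem_bPx.1 hRb
    have hmul : R * (G / R) = G := EuclideanDomain.mul_div_cancel' hRirr.ne_zero hRd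
    have hcop : IsCoprime R (G / R) ↔ ¬ R ∣ (G / R) := (hRirr.prime).coprime_iff_not_dvd
    have huniq : ∀ R' : Polynomial Fq, R'.Monic → Irreducible R' → R' ∣ R → R' = R := by
      intro R' hm' hi' hd'
      exact Polynomial.eq_of_monic_of_associated hm' hRm (hi'.associated_of_dvd hRirr hd')
    by_cases hdvd : R ∣ G / R
    · have hset : (((Finset.Icc h n).biUnion (Px Fq)).filter (· ∣ G / R)) = S := by
        rw [hSdef]
        apply Finset.filter_congr
        intro R' hR'b
        obtain ⟨hR'm, hR'irr, _⟩ := mem_bPx.1 hR'b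
        constructor
        · intro hd; exact hd.trans ⟨R, by rw [mul_comm]; exact hmul.symm⟩
        · intro hd
          by_cases hRR : R' = R
          · subst hRR; exact hdvd
          · have hd2 : R' ∣ R * (G / R) := by rw [hmul]; exact hd
            rcases (hR'irr.prime).dvd_mul.1 hd2 with hc | hc
            · exact absurd (huniq R' hR'm hR'irr hc) hRR
            · exact hc
      rw [hmul, omegaIcc, hset, if_neg (fun hc => (hcop.1 hc) hdvd), zero_add]
    · have hset : (((Finset.Icc h n).biUnion (Px Fq)).filter (· ∣ G / R)) = S.erase R := by
        ext R'
        simp only [Finset.mem_erase, hSdef, Finset.mem_filter]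
        constructor
        · intro ⟨hb, hd⟩
          obtain ⟨hR'm, hR'irr, _⟩ := mem_bPx.1 hb
          refine ⟨fun hRR => hdvd (hRR ▸ hd), hb, hd.trans ⟨R, by rw [mul_comm]; exact hmul.symm⟩⟩
        · intro ⟨hRR, hb, hd⟩
          obtain ⟨hR'm, hR'irr, _⟩ := mem_bPx.1 hb
          refine ⟨hb, ?_⟩
          have hd2 : R' ∣ R * (G / R) := by rw [hmul]; exact hd
          rcases (hR'irr.prime).dvd_mul.1 hd2 with hc | hc
          · exact absurd (huniq R' hR'm hR'irr hc) hRR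
          · exact hc
      rw [hmul, omegaIcc, hset, if_pos (hcop.2 hdvd),
        Finset.card_erase_of_mem (hSdef ▸ hR)]
      have : ((S.card - 1 : ℕ) : ℂ) = (S.card : ℂ) - 1 := by
        push_cast [Nat.cast_sub hk]
        ring
      rw [this]
      congr 1
      ring
  rw [Finset.sum_congr rfl key, Finset.sum_const, nsmul_eq_mul]
  have hkc : (S.card : ℂ) ≠ 0 := Nat.cast_ne_zero.2 hk.ne'
  field_simp
end

section
/- The number of monic irreducible polynomials of degree x over F_q satisfies π_q(x) ≤ q^x / x for all x ≥ 1, and q^x/x - 2q^{x/2}/x ≤ π_q(x). -/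
open Polynomial Finset Filter
open scoped Classical

variable {Fq : Type} [Field Fq] [Fintype Fq]

lemma sum_deg_lt (n : ℕ) (c : Fin n → Fq) :
    (∑ i : Fin n, Polynomial.C (c i) * Polynomial.X ^ (i : ℕ)).degree < (n : WithBot ℕ) := by
  apply lt_of_le_of_lt (Polynomial.degree_sum_le _ _)
  apply Finset.sup_lt_iff (by exact_mod_cast WithBot.bot_lt_coe n) |>.2
  intro i _
  apply lt_of_le_of_lt (degree_C_mul_X_pow_le _ _)
  exact_mod_cast i.2

lemma mem_Mn_iff {n : ℕ} {P : Polynomial Fq} :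
    P ∈ Mn Fq n ↔ P.Monic ∧ P.natDegree = n := by
  constructor
  · rintro hP
    simp only [Mn, Finset.mem_image, Finset.mem_univ, true_and] at hP
    obtain ⟨c, rfl⟩ := hP
    have h := sum_deg_lt n c
    have hm : (X ^ n + ∑ i : Fin n, Polynomial.C (c i) * X ^ (i : ℕ)).Monic :=
      Polynomial.monic_X_pow_add (by simpa using h)
    refine ⟨hm, ?_⟩
    have : (X ^ n + ∑ i : Fin n, Polynomial.C (c i) * X ^ (i : ℕ)).degree = (n : WithBot ℕ) := by
      rw [Polynomial.degree_add_eq_left_of_degree_lt (by rw [degree_X_pow]; exact h), degree_X_pow]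
    exact natDegree_eq_of_degree_eq_some this
  · rintro ⟨hm, rfl⟩
    simp only [Mn, Finset.mem_image, Finset.mem_univ, true_and]
    refine ⟨fun i => P.coeff i, ?_⟩
    ext k
    rw [coeff_add, coeff_X_pow, Polynomial.finset_sum_coeff]
    simp only [Polynomial.coeff_C_mul, coeff_X_pow]
    rcases lt_trichotomy k P.natDegree with hk | hk | hk
    · rw [if_neg (by omega), Finset.sum_eq_single ⟨k, hk⟩]
      · simp
      · intro b _ hb
        simp only [mul_ite, mul_one, mul_zero, ite_eq_right_iff]
        intro hbk; exact absurd (Fin.ext_iff.2 (by simp [hbk])) hb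
      · simp
    · rw [if_pos hk, Finset.sum_eq_zero, hk, hm.coeff_natDegree, add_zero]
      intro b _
      simp only [mul_ite, mul_one, mul_zero, ite_eq_right_iff]
      intro hbk; omega
    · rw [if_neg (by omega), Finset.sum_eq_zero, P.coeff_eq_zero_of_natDegree_lt hk, add_zero]
      intro b _
      simp only [mul_ite, mul_one, mul_zero, ite_eq_right_iff]
      intro hbk; have := b.2; omega

lemma irred_dvd_gauss (P : Polynomial Fq) (hP : Irreducible P) (hm : P.Monic)
    {n : ℕ} (hd : P.natDegree ∣ n) :
    P ∣ (X ^ (Fintype.card Fq ^ n) - X) := by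
  haveI : Fact (Irreducible P) := ⟨hP⟩
  set E := AdjoinRoot P
  have hP0 : P ≠ 0 := hP.ne_zero
  set pb : PowerBasis Fq E := AdjoinRoot.powerBasis hP0 with hpb
  have hdim : pb.dim = P.natDegree := AdjoinRoot.powerBasis_dim hP0
  haveI : Module.Finite Fq E := Module.Finite.of_basis pb.basis
  haveI : Finite E := Module.finite_of_finite Fq
  haveI : Fintype E := Fintype.ofFinite E
  have hcardE : Fintype.card E = Fintype.card Fq ^ P.natDegree := by
    rw [Module.card_fintype pb.basis, Fintype.card_fin, hdim]
  obtain ⟨k, hk⟩ := hd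
  set r : E := AdjoinRoot.root P
  have hroot : r ^ (Fintype.card Fq ^ n) = r := by
    rw [hk, pow_mul, ← hcardE]
    exact FiniteField.pow_card_pow k r
  have haev : (aeval r) (X ^ (Fintype.card Fq ^ n) - X : Polynomial Fq) = 0 := by
    simp [hroot]
  have hmin : P = minpoly Fq r :=
    minpoly.eq_of_irreducible_of_monic hP (by rw [aeval_def]; exact AdjoinRoot.eval₂_root P) hm
  rw [hmin]
  exact minpoly.dvd Fq r haev

variable (Fq) in
lemma exists_field_ext (n : ℕ) (hn : n ≠ 0) :
    ∃ (F : Type) (_ : Field F) (_ : Fintype F) (_ : Algebra Fq F),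
      Fintype.card F = Fintype.card Fq ^ n := by
  have hq1 : 1 < Fintype.card Fq := Fintype.one_lt_card
  obtain ⟨p, hchar⟩ := CharP.exists Fq
  obtain ⟨m, hp, hcard⟩ := FiniteField.card Fq p
  haveI : Fact p.Prime := ⟨hp⟩
  set e : ℕ := p ^ (m * n) with he
  have hee : e = Fintype.card Fq ^ n := by rw [he, pow_mul, hcard]
  have hmn : (m : ℕ) * n ≠ 0 := by positivity
  set g : Polynomial Fq := X ^ e - X with hg
  have he1 : 1 < e := Nat.one_lt_pow hmn hp.one_lt
  have aux : g ≠ 0 := FiniteField.X_pow_card_sub_X_ne_zero _ he1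
  let F := g.SplittingField
  haveI : CharP F p := (Algebra.charP_iff Fq F p).mp hchar
  haveI : FiniteDimensional Fq F := by infer_instance
  haveI : Finite F := Module.finite_of_finite Fq
  haveI fF : Fintype F := Fintype.ofFinite F
  have hsep : g.Separable := galois_poly_separable p e (dvd_pow_self p hmn)
  have key : Fintype.card (g.rootSet F) = g.natDegree :=
    card_rootSet_eq_natDegree hsep (SplittingField.splits g)
  have ndeg : g.natDegree = e := FiniteField.X_pow_card_sub_X_natDegree_eq _ he1
  have huniv : g.rootSet F = Set.univ := by
    rw [Set.eq_univ_iff_forall]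
    suffices h : ∀ (x) (_ : x ∈ (⊤ : Subalgebra Fq F)), x ∈ g.rootSet F by simpa using h
    rw [← SplittingField.adjoin_rootSet]
    simp_rw [Algebra.mem_adjoin_iff]
    intro x hx
    refine Subring.closure_induction ?_ ?_ ?_ ?_ ?_ ?_ hx <;> simp_rw [mem_rootSet_of_ne aux]
    · rintro x (⟨r, rfl⟩ | hx)
      · simp only [hg, map_sub, map_pow, aeval_X]
        rw [← map_pow]
        rw [he, pow_mul, ← hcard]
        rw [FiniteField.pow_card_pow n r, sub_self]
      · rwa [mem_rootSet_of_ne aux] at hx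
    · rw [← coeff_zero_eq_aeval_zero']
      simp only [hg, coeff_X_pow, coeff_X_zero, sub_zero, _root_.map_eq_zero, ite_eq_right_iff,
        one_ne_zero, coeff_sub]
      omega
    · simp [hg]
    · simp only [hg, aeval_X_pow, aeval_X, map_sub, he, add_pow_char_pow, sub_eq_zero]
      intro x y _ _ hx hy
      rw [hx, hy]
    · intro x _ hx
      simp only [hg, sub_eq_zero, aeval_X_pow, aeval_X, map_sub, sub_neg_eq_add, he] at *
      rw [neg_pow, hx, neg_one_pow_char_pow]
      ring
    · simp only [hg, aeval_X_pow, aeval_X, map_sub, mul_pow, sub_eq_zero]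
      intro x y _ _ hx hy
      rw [hx, hy]
  refine ⟨F, inferInstance, fF, inferInstance, ?_⟩
  rw [← hee, ← ndeg, ← key,
    Fintype.card_congr ((Equiv.setCongr huniv).trans (Equiv.Set.univ F))]

lemma geom_sum_le_two_pow (q m : ℕ) (hq : 2 ≤ q) :
    ∑ d ∈ Finset.Icc 1 m, q ^ d ≤ 2 * q ^ m := by
  induction m with
  | zero => simp
  | succ m ih =>
    rw [Finset.sum_Icc_succ_top (by omega)]
    have h2 : 2 * q ^ m ≤ q ^ (m + 1) := by
      rw [pow_succ, mul_comm]
      exact Nat.mul_le_mul_left _ hq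
    omega

variable (Fq) in
lemma key_counting (n : ℕ) (hn : 1 ≤ n) :
    n * (Px Fq n).card ≤ Fintype.card Fq ^ n ∧
    Fintype.card Fq ^ n ≤ n * (Px Fq n).card + 2 * Fintype.card Fq ^ (n / 2) := by
  classical
  set q := Fintype.card Fq with hqdef
  have hq1 : 1 < q := Fintype.one_lt_card
  have hqn1 : 1 < q ^ n := Nat.one_lt_pow (by omega) hq1
  obtain ⟨F, _, _, _, hF⟩ := exists_field_ext Fq n (by omega)
  haveI : Module.Finite Fq F := Module.Finite.of_finite
  have hint : ∀ α : F, IsIntegral Fq α := fun α => Algebra.IsIntegral.isIntegral α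
  -- char
  obtain ⟨p, hchar⟩ := CharP.exists Fq
  obtain ⟨m, hp, hcard⟩ := FiniteField.card Fq p
  haveI : Fact p.Prime := ⟨hp⟩
  have hpq : p ∣ q ^ n := by
    rw [hqdef, hcard, ← pow_mul]
    exact dvd_pow_self p (by positivity)
  have hg_sep : (X ^ (q ^ n) - X : Polynomial Fq).Separable := galois_poly_separable p _ hpq
  -- the big polynomial over F
  set gF : Polynomial F := X ^ (q ^ n) - X with hgFdef
  have hgF_ne : gF ≠ 0 := FiniteField.X_pow_card_sub_X_ne_zero F hqn1
  have hgF_deg : gF.natDegree = q ^ n := FiniteField.X_pow_card_sub_X_natDegree_eq F hqn1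
  have hgF_roots : gF.roots = Finset.univ.val := by
    rw [hgFdef, ← hF]
    exact FiniteField.roots_X_pow_card_sub_X F
  have hgF_splits : gF.Splits := by
    rw [splits_iff_card_roots, hgF_roots, hgF_deg]
    simpa using hF
  -- roots of mapped polynomials
  set rootsFin : Polynomial Fq → Finset F :=
    fun P => (P.map (algebraMap Fq F)).roots.toFinset with hrootsFin
  have hPx : ∀ P ∈ Px Fq n, P.Monic ∧ P.natDegree = n ∧ Irreducible P := by
    intro P hP
    rw [Px, Finset.mem_filter, mem_Mn_iff] at hP
    tauto
  have hmem_roots : ∀ (P : Polynomial Fq), P.Monic → ∀ α : F,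
      (α ∈ rootsFin P ↔ (aeval α) P = 0) := by
    intro P hm α
    rw [hrootsFin, Multiset.mem_toFinset, mem_roots ((hm.map (algebraMap Fq F)).ne_zero),
      IsRoot.def, eval_map, ← aeval_def]
  have hcard_rootsFin : ∀ P ∈ Px Fq n, (rootsFin P).card = n := by
    intro P hP
    obtain ⟨hm, hd, hirr⟩ := hPx P hP
    have hdvd : P ∣ (X ^ (q ^ n) - X : Polynomial Fq) :=
      irred_dvd_gauss P hirr hm (hd ▸ dvd_refl n)
    have hmap_dvd : P.map (algebraMap Fq F) ∣ gF := by
      have := Polynomial.map_dvd (algebraMap Fq F) hdvd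
      simpa [Polynomial.map_sub, Polynomial.map_pow, map_X] using this
    have hsplit : (P.map (algebraMap Fq F)).Splits :=
      hgF_splits.of_dvd hgF_ne hmap_dvd
    have hsep : (P.map (algebraMap Fq F)).Separable :=
      (hg_sep.of_dvd hdvd).map
    have hnodup := nodup_roots hsep
    rw [hrootsFin, Multiset.toFinset_card_of_nodup hnodup,
      splits_iff_card_roots.mp hsplit, hm.natDegree_map, hd]
  have hdisj : ∀ P ∈ Px Fq n, ∀ P' ∈ Px Fq n, P ≠ P' →
      Disjoint (rootsFin P) (rootsFin P') := by
    intro P hP P' hP' hne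
    obtain ⟨hm, hd, hirr⟩ := hPx P hP
    obtain ⟨hm', hd', hirr'⟩ := hPx P' hP'
    rw [Finset.disjoint_left]
    intro α hα hα'
    rw [hmem_roots P hm] at hα
    rw [hmem_roots P' hm'] at hα'
    exact hne ((minpoly.eq_of_irreducible_of_monic hirr hα hm).trans
      (minpoly.eq_of_irreducible_of_monic hirr' hα' hm').symm)
  have hbiUnion_card : ((Px Fq n).biUnion rootsFin).card = n * (Px Fq n).card := by
    rw [Finset.card_biUnion hdisj, Finset.sum_congr rfl hcard_rootsFin,
      Finset.sum_const, smul_eq_mul, Nat.mul_comm]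
  constructor
  · rw [← hbiUnion_card, ← hF]
    exact (Finset.card_le_univ _).trans_eq Finset.card_univ.symm
  -- lower bound
  have hfinrank : Module.finrank Fq F = n := by
    have := Module.card_eq_pow_finrank (K := Fq) (V := F)
    rw [hF] at this
    exact Nat.pow_right_injective hq1 this.symm
  set S := Finset.univ.filter (fun α : F => (minpoly Fq α).natDegree = n) with hS
  set T := Finset.univ.filter (fun α : F => ¬ (minpoly Fq α).natDegree = n) with hT
  have hST : S.card + T.card = q ^ n := by
    rw [hS, hT, Finset.card_filter_add_card_filter_not, Finset.card_univ, hF]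
  have hScard : S.card ≤ n * (Px Fq n).card := by
    rw [← hbiUnion_card]
    apply Finset.card_le_card
    intro α hα
    rw [hS, Finset.mem_filter] at hα
    rw [Finset.mem_biUnion]
    have hmono := minpoly.monic (hint α)
    refine ⟨minpoly Fq α, ?_, ?_⟩
    · rw [Px, Finset.mem_filter, mem_Mn_iff]
      exact ⟨⟨hmono, hα.2⟩, minpoly.irreducible (hint α)⟩
    · rw [hmem_roots _ hmono]
      exact minpoly.aeval Fq α
  -- degree of minpoly divides n, and power identity
  have hTsub : T ⊆ (n.properDivisors).biUnion
      (fun d => ((X ^ (q ^ d) - X : Polynomial F).roots.toFinset)) := by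
    intro α hα
    rw [hT, Finset.mem_filter] at hα
    set d := (minpoly Fq α).natDegree with hd
    set E := IntermediateField.adjoin Fq ({α} : Set F) with hE
    haveI : FiniteDimensional Fq E := by
      exact IntermediateField.adjoin.finiteDimensional (hint α)
    have hrankE : Module.finrank Fq E = d := IntermediateField.adjoin.finrank (hint α)
    have hdvd : d ∣ n := by
      refine ⟨Module.finrank E F, ?_⟩
      rw [← hrankE, ← hfinrank]
      exact (Module.finrank_mul_finrank Fq E F).symm
    have hdpos : 0 < d := minpoly.natDegree_pos (hint α)
    have hdn : d < n := lt_of_le_of_ne (Nat.le_of_dvd (by omega) hdvd) hα.2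
    haveI : Fintype E := Fintype.ofFinite E
    have hcardE : Fintype.card E = q ^ d := by
      rw [Module.card_eq_pow_finrank (K := Fq) (V := E), hrankE]
    have hqd1 : 1 < q ^ d := Nat.one_lt_pow (by omega) hq1
    have hαpow : α ^ (q ^ d) = α := by
      have hmem : α ∈ E := IntermediateField.mem_adjoin_simple_self Fq α
      have h1 := FiniteField.pow_card (⟨α, hmem⟩ : E)
      rw [hcardE] at h1
      simpa using congrArg (Subtype.val) h1
    rw [Finset.mem_biUnion]
    refine ⟨d, Nat.mem_properDivisors.mpr ⟨hdvd, hdn⟩, ?_⟩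
    rw [Multiset.mem_toFinset, mem_roots (FiniteField.X_pow_card_sub_X_ne_zero F hqd1),
      IsRoot.def]
    simp [hαpow]
  have hTcard : T.card ≤ 2 * q ^ (n / 2) := by
    calc T.card ≤ ∑ d ∈ n.properDivisors,
        ((X ^ (q ^ d) - X : Polynomial F).roots.toFinset).card :=
          (Finset.card_le_card hTsub).trans (Finset.card_biUnion_le)
      _ ≤ ∑ d ∈ n.properDivisors, q ^ d := by
          apply Finset.sum_le_sum
          intro d _
          calc ((X ^ (q ^ d) - X : Polynomial F).roots.toFinset).card
              ≤ Multiset.card (X ^ (q ^ d) - X : Polynomial F).roots :=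
                Multiset.toFinset_card_le _
            _ ≤ (X ^ (q ^ d) - X : Polynomial F).natDegree := card_roots' _
            _ ≤ q ^ d := by
                refine (natDegree_sub_le _ _).trans ?_
                simp only [natDegree_X_pow, natDegree_X]
                exact max_le le_rfl (Nat.one_le_pow d q (by omega))
      _ ≤ ∑ d ∈ Finset.Icc 1 (n / 2), q ^ d := by
          apply Finset.sum_le_sum_of_subset
          intro d hd
          rw [Nat.mem_properDivisors] at hd
          obtain ⟨⟨k, hk⟩, hdn⟩ := hd
          rw [Finset.mem_Icc]
          have hk2 : 2 ≤ k := by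
            rcases k with _ | _ | k
            · simp at hk; omega
            · simp at hk; omega
            · omega
          constructor
          · rcases Nat.eq_zero_or_pos d with h | h
            · subst h; simp at hk; omega
            · omega
          · rw [Nat.le_div_iff_mul_le (by omega : 0 < 2)]
            calc d * 2 ≤ d * k := Nat.mul_le_mul_left d hk2
              _ = n := hk.symm
      _ ≤ 2 * q ^ (n / 2) := geom_sum_le_two_pow q (n / 2) hq1
  omega

theorem prime_polynomial_count (Fq : Type) [Field Fq] [Fintype Fq]
    (x : ℕ) (hx : 1 ≤ x) :
    ((Px Fq x).card : ℝ) ≤ (Fintype.card Fq : ℝ) ^ x / (x : ℝ) ∧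
    (Fintype.card Fq : ℝ) ^ x / (x : ℝ) -
        2 * (Fintype.card Fq : ℝ) ^ ((x : ℝ) / 2) / (x : ℝ) ≤ ((Px Fq x).card : ℝ) := by
  have hq1 : 1 < Fintype.card Fq := Fintype.one_lt_card
  obtain ⟨h1, h2⟩ := key_counting Fq x hx
  have hxpos : (0 : ℝ) < x := by exact_mod_cast hx
  have hq0 : (0 : ℝ) ≤ (Fintype.card Fq : ℝ) := by positivity
  have h1R : (x : ℝ) * ((Px Fq x).card : ℝ) ≤ (Fintype.card Fq : ℝ) ^ x := by
    exact_mod_cast h1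
  have h2R : (Fintype.card Fq : ℝ) ^ x ≤
      (x : ℝ) * ((Px Fq x).card : ℝ) + 2 * (Fintype.card Fq : ℝ) ^ (x / 2 : ℕ) := by
    exact_mod_cast h2
  have hhalf : (Fintype.card Fq : ℝ) ^ (x / 2 : ℕ) ≤
      (Fintype.card Fq : ℝ) ^ ((x : ℝ) / 2) := by
    rw [← Real.rpow_natCast (Fintype.card Fq : ℝ) (x / 2)]
    apply Real.rpow_le_rpow_of_exponent_le (by exact_mod_cast hq1.le)
    exact_mod_cast Nat.cast_div_le
  constructor
  · rw [le_div_iff₀ hxpos]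
    calc ((Px Fq x).card : ℝ) * x = x * ((Px Fq x).card : ℝ) := mul_comm _ _
      _ ≤ _ := h1R
  · rw [div_sub_div_same, div_le_iff₀ hxpos]
    have : (Fintype.card Fq : ℝ) ^ x - 2 * (Fintype.card Fq : ℝ) ^ ((x : ℝ) / 2) ≤
        (x : ℝ) * ((Px Fq x).card : ℝ) := by nlinarith
    linarith [this, mul_comm ((Px Fq x).card : ℝ) (x : ℝ)]
end
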